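/- arXiv:1904.01882 — 4 statements merged into one kernel-verified Lean document; each statement's English description precedes it below -/
import Mathlib

section
/- Let A ⊆ ℝᵈ be nonempty, closed and convex, M : ℝᵈ → ℝᵈ be monotone and continuous on A, and suppose SOL(A, M) is nonempty. For ε > 0 let y(ε) denote the unique solution of VI(A, M + ε·Id). Then ‖y(ε)‖ ≤ ‖x*‖ for every x* ∈ SOL(A, M); in particular the Tikhonov trajectory {y(ε)}_{ε>0} is uniformly bounded. -/
open RealInnerProductSpace

theorem stmt_6 {d : ℕ} (A : Set (EuclideanSpace ℝ (Fin d)))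
    (hA_ne : A.Nonempty) (hA_closed : IsClosed A) (hA_convex : Convex ℝ A)
    (M : EuclideanSpace ℝ (Fin d) → EuclideanSpace ℝ (Fin d))
    (hcont : ContinuousOn M A)
    (hmono : ∀ x ∈ A, ∀ y ∈ A, 0 ≤ ⟪M x - M y, x - y⟫)
    (ε : ℝ) (hε : 0 < ε)
    (yε : EuclideanSpace ℝ (Fin d)) (hyε : yε ∈ A)
    (hsol : ∀ y ∈ A, 0 ≤ ⟪M yε + ε • yε, y - yε⟫)
    (xstar : EuclideanSpace ℝ (Fin d)) (hxstar : xstar ∈ A)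
    (hxsol : ∀ x ∈ A, 0 ≤ ⟪M xstar, x - xstar⟫) :
    ‖yε‖ ≤ ‖xstar‖ := by
  have h1 := hsol xstar hxstar
  have h2 := hxsol yε hyε
  have h3 := hmono yε hyε xstar hxstar
  -- ⟪yε, xstar - yε⟫ ≥ 0
  have key : 0 ≤ ⟪yε, xstar - yε⟫ := by
    have e1 : ⟪M yε + ε • yε, xstar - yε⟫
        = ⟪M yε, xstar - yε⟫ + ε * ⟪yε, xstar - yε⟫ := by
      rw [inner_add_left, real_inner_smul_left]
    have e2 : ⟪M yε - M xstar, yε - xstar⟫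
        = -⟪M yε, xstar - yε⟫ - ⟪M xstar, yε - xstar⟫ := by
      rw [inner_sub_left]
      have h5 : ⟪M yε, yε - xstar⟫ = -⟪M yε, xstar - yε⟫ := by
        rw [← inner_neg_right]; congr 1; abel
      rw [h5]
    nlinarith [h1, h2, h3, e1, e2]
  have hcs : ⟪yε, xstar⟫ ≤ ‖yε‖ * ‖xstar‖ := real_inner_le_norm yε xstar
  have hsq : ‖yε‖ ^ 2 ≤ ⟪yε, xstar⟫ := by
    have : ⟪yε, xstar - yε⟫ = ⟪yε, xstar⟫ - ⟪yε, yε⟫ := inner_sub_right _ _ _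
    rw [this] at key
    rw [← real_inner_self_eq_norm_sq]
    linarith
  nlinarith [norm_nonneg yε, norm_nonneg xstar, hsq, hcs]
end

section
/- Let A ⊆ ℝᵈ be nonempty, closed and convex, M : ℝᵈ → ℝᵈ be monotone and Lipschitz continuous, SOL(A, M) nonempty, and for ε > 0 let y(ε) be the unique solution of VI(A, M + ε·Id). Then for 0 < ε ≤ ε', ‖y(ε) - y(ε')‖ ≤ M_y · (ε' - ε)/ε, where M_y is any uniform bound on ‖y(ε)‖ over ε > 0. -/
open RealInnerProductSpace

theorem stmt_7 {d : ℕ} (A : Set (EuclideanSpace ℝ (Fin d)))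
    (hA_ne : A.Nonempty) (hA_closed : IsClosed A) (hA_convex : Convex ℝ A)
    (M : EuclideanSpace ℝ (Fin d) → EuclideanSpace ℝ (Fin d))
    (L : ℝ) (hLip : ∀ x y, ‖M x - M y‖ ≤ L * ‖x - y‖)
    (hmono : ∀ x ∈ A, ∀ y ∈ A, 0 ≤ ⟪M x - M y, x - y⟫)
    (hSOL : ∃ x ∈ A, ∀ z ∈ A, 0 ≤ ⟪M x, z - x⟫)
    (yfun : ℝ → EuclideanSpace ℝ (Fin d))
    (hy : ∀ ε > (0 : ℝ), yfun ε ∈ A ∧ ∀ z ∈ A, 0 ≤ ⟪M (yfun ε) + ε • yfun ε, z - yfun ε⟫)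
    (My : ℝ) (hMy : ∀ ε > (0 : ℝ), ‖yfun ε‖ ≤ My)
    (ε ε' : ℝ) (hε : 0 < ε) (hεε' : ε ≤ ε') :
    ‖yfun ε - yfun ε'‖ ≤ My * (ε' - ε) / ε := by
  have hε' : (0:ℝ) < ε' := lt_of_lt_of_le hε hεε'
  obtain ⟨hyA, hyVI⟩ := hy ε hε
  obtain ⟨hy'A, hy'VI⟩ := hy ε' hε'
  set y := yfun ε
  set y' := yfun ε'
  have h1 : 0 ≤ ⟪M y + ε • y, y' - y⟫ := hyVI y' hy'A
  have h2 : 0 ≤ ⟪M y' + ε' • y', y - y'⟫ := hy'VI y hyA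
  have hm : 0 ≤ ⟪M y - M y', y - y'⟫ := hmono y hyA y' hy'A
  -- key inequality: ε * ‖y - y'‖^2 ≤ (ε' - ε) * ⟪y', y - y'⟫
  have key : ε * ‖y - y'‖^2 ≤ (ε' - ε) * ⟪y', y - y'⟫ := by
    have hsum : 0 ≤ ⟪M y - M y', y' - y⟫ + ⟪ε • y - ε' • y', y' - y⟫ := by
      have := add_nonneg h1 h2
      have e1 : ⟪M y + ε • y, y' - y⟫ + ⟪M y' + ε' • y', y - y'⟫
          = ⟪M y - M y', y' - y⟫ + ⟪ε • y - ε' • y', y' - y⟫ := by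
        have hy' : (y : EuclideanSpace ℝ (Fin d)) - y' = -(y' - y) := by abel
        rw [inner_add_left, inner_add_left, hy', inner_neg_right, inner_neg_right,
          inner_sub_left, inner_sub_left]
        ring
      linarith [e1 ▸ this]
    have hmn : ⟪M y - M y', y' - y⟫ ≤ 0 := by
      have : (y' : EuclideanSpace ℝ (Fin d)) - y = -(y - y') := by abel
      rw [this, inner_neg_right]; linarith
    have h3 : 0 ≤ ⟪ε • y - ε' • y', y' - y⟫ := by linarith
    have e2 : ⟪ε • y - ε' • y', y' - y⟫
        = -(ε * ⟪y - y', y - y'⟫) + (ε' - ε) * ⟪y', y - y'⟫ := by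
      have hy' : (y' : EuclideanSpace ℝ (Fin d)) - y = -(y - y') := by abel
      have hd : ⟪y, y - y'⟫ = ⟪y - y', y - y'⟫ + ⟪y', y - y'⟫ := by
        rw [← inner_add_left]; congr 1; abel
      rw [hy', inner_neg_right, inner_sub_left, real_inner_smul_left, real_inner_smul_left, hd]
      ring
    rw [e2] at h3
    have : ⟪y - y', y - y'⟫ = ‖y - y'‖^2 := real_inner_self_eq_norm_sq _
    nlinarith
  have hMy0 : 0 ≤ My := le_trans (norm_nonneg y) (hMy ε hε)
  have hnormy' : ‖y'‖ ≤ My := hMy ε' hε'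
  have hinner : ⟪y', y - y'⟫ ≤ My * ‖y - y'‖ := by
    calc ⟪y', y - y'⟫ ≤ ‖y'‖ * ‖y - y'‖ := real_inner_le_norm _ _
    _ ≤ My * ‖y - y'‖ := by
        exact mul_le_mul_of_nonneg_right hnormy' (norm_nonneg _)
  rcases eq_or_lt_of_le (norm_nonneg (y - y')) with h0 | h0
  · rw [← h0]
    exact div_nonneg (mul_nonneg hMy0 (by linarith)) hε.le
  · have : ε * ‖y - y'‖^2 ≤ (ε' - ε) * (My * ‖y - y'‖) := by
      calc ε * ‖y - y'‖^2 ≤ (ε' - ε) * ⟪y', y - y'⟫ := key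
      _ ≤ (ε' - ε) * (My * ‖y - y'‖) :=
          mul_le_mul_of_nonneg_left hinner (by linarith)
    rw [div_eq_inv_mul, ← mul_le_mul_iff_right₀ hε, ← mul_assoc, mul_inv_cancel₀ hε.ne', one_mul]
    nlinarith
end

section
/- Let A ⊆ ℝᵈ be nonempty, closed and convex, M : ℝᵈ → ℝᵈ monotone and continuous with SOL(A, M) nonempty, and let ε(t) ↓ 0. Then the Tikhonov sequence y(t) ∈ SOL(A, M + ε(t)·Id) converges to the least-norm element of SOL(A, M). -/
open RealInnerProductSpace

theorem stmt_8 {d : ℕ} (A : Set (EuclideanSpace ℝ (Fin d)))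
    (hA_ne : A.Nonempty) (hA_closed : IsClosed A) (hA_convex : Convex ℝ A)
    (M : EuclideanSpace ℝ (Fin d) → EuclideanSpace ℝ (Fin d))
    (hcont : ContinuousOn M A)
    (hmono : ∀ x ∈ A, ∀ y ∈ A, 0 ≤ ⟪M x - M y, x - y⟫)
    (hSOL : ∃ x ∈ A, ∀ z ∈ A, 0 ≤ ⟪M x, z - x⟫)
    (ε : ℕ → ℝ) (hεpos : ∀ t, 0 < ε t) (hεanti : StrictAnti ε)
    (hεlim : Filter.Tendsto ε Filter.atTop (nhds 0))
    (y : ℕ → EuclideanSpace ℝ (Fin d))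
    (hy : ∀ t, y t ∈ A ∧ ∀ z ∈ A, 0 ≤ ⟪M (y t) + ε t • y t, z - y t⟫)
    (astar : EuclideanSpace ℝ (Fin d)) (hastar : astar ∈ A)
    (hasol : ∀ z ∈ A, 0 ≤ ⟪M astar, z - astar⟫)
    (hleast : ∀ x ∈ A, (∀ z ∈ A, 0 ≤ ⟪M x, z - x⟫) → ‖astar‖ ≤ ‖x‖) :
    Filter.Tendsto y Filter.atTop (nhds astar) := by
  -- Key inequality: ⟪y t, astar - y t⟫ ≥ 0 for all t
  have key : ∀ t, 0 ≤ ⟪y t, astar - y t⟫ := by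
    intro t
    obtain ⟨hyA, hyVI⟩ := hy t
    have h1 := hyVI astar hastar
    have h2 := hasol (y t) hyA
    have h3 := hmono (y t) hyA astar hastar
    rw [inner_add_left, real_inner_smul_left] at h1
    rw [inner_sub_left] at h3
    have hrw : ⟪M (y t), astar - y t⟫ = -⟪M (y t), y t - astar⟫ := by
      rw [← inner_neg_right]; congr 1; abel
    have hrw2 : ⟪y t, astar - y t⟫ = -⟪y t, y t - astar⟫ := by
      rw [← inner_neg_right]; congr 1; abel
    rw [hrw, hrw2] at h1
    rw [hrw2]
    nlinarith [hεpos t]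
  -- Norm bound: ‖y t‖ ≤ ‖astar‖
  have hbound : ∀ t, ‖y t‖ ≤ ‖astar‖ := by
    intro t
    have h := key t
    rw [inner_sub_right, real_inner_self_eq_norm_sq] at h
    have h2 := real_inner_le_norm (y t) astar
    nlinarith [norm_nonneg (y t), norm_nonneg astar]
  -- The sequence lies in a compact ball
  have hball : ∀ t, y t ∈ Metric.closedBall (0 : EuclideanSpace ℝ (Fin d)) ‖astar‖ := by
    intro t; simpa [Metric.mem_closedBall, dist_eq_norm] using hbound t
  apply Filter.tendsto_of_subseq_tendsto
  intro ns hns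
  obtain ⟨x, hxball, φ, hφmono, hφlim⟩ :=
    (isCompact_closedBall (0 : EuclideanSpace ℝ (Fin d)) ‖astar‖).tendsto_subseq
      (fun n => hball (ns n))
  refine ⟨φ, ?_⟩
  -- the subsequence index map
  set σ : ℕ → ℕ := fun n => ns (φ n) with hσ
  have hσlim : Filter.Tendsto σ Filter.atTop Filter.atTop :=
    hns.comp hφmono.tendsto_atTop
  have hylim : Filter.Tendsto (fun n => y (σ n)) Filter.atTop (nhds x) := hφlim
  -- x ∈ A
  have hxA : x ∈ A := hA_closed.mem_of_tendsto hylim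
    (Filter.Eventually.of_forall fun n => (hy (σ n)).1)
  have hεσ : Filter.Tendsto (fun n => ε (σ n)) Filter.atTop (nhds 0) := hεlim.comp hσlim
  have hMlim : Filter.Tendsto (fun n => M (y (σ n))) Filter.atTop (nhds (M x)) := by
    apply ((hcont x hxA).tendsto).comp
    exact tendsto_nhdsWithin_of_tendsto_nhds_of_eventually_within _ hylim
      (Filter.Eventually.of_forall fun n => (hy (σ n)).1)
  -- x is a solution of the VI
  have hxSOL : ∀ z ∈ A, 0 ≤ ⟪M x, z - x⟫ := by
    intro z hz
    have hlim : Filter.Tendsto (fun n => ⟪M (y (σ n)) + ε (σ n) • y (σ n), z - y (σ n)⟫)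
        Filter.atTop (nhds ⟪M x + (0:ℝ) • x, z - x⟫) := by
      apply Filter.Tendsto.inner
      · exact hMlim.add (hεσ.smul hylim)
      · exact tendsto_const_nhds.sub hylim
    simp only [zero_smul, add_zero] at hlim
    exact ge_of_tendsto' hlim fun n => (hy (σ n)).2 z hz
  -- limit of key inequality
  have hkeylim : 0 ≤ ⟪x, astar - x⟫ := by
    have hlim : Filter.Tendsto (fun n => ⟪y (σ n), astar - y (σ n)⟫)
        Filter.atTop (nhds ⟪x, astar - x⟫) :=
      hylim.inner (tendsto_const_nhds.sub hylim)
    exact ge_of_tendsto' hlim fun n => key (σ n)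
  -- x = astar
  have hxeq : x = astar := by
    have hn : ‖astar‖ ≤ ‖x‖ := hleast x hxA hxSOL
    have hsq : ‖astar‖ ^ 2 ≤ ‖x‖ ^ 2 := by
      apply pow_le_pow_left₀ (norm_nonneg _) hn
    rw [inner_sub_right, real_inner_self_eq_norm_sq] at hkeylim
    have hzero : ⟪x - astar, x - astar⟫ ≤ 0 := by
      rw [inner_sub_left, inner_sub_right, inner_sub_right,
        real_inner_self_eq_norm_sq, real_inner_self_eq_norm_sq,
        real_inner_comm astar x]
      nlinarith [real_inner_comm x astar]
    have : x - astar = 0 := by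
      have := inner_self_nonneg (𝕜 := ℝ) (x := x - astar)
      have h0 : ⟪x - astar, x - astar⟫ = (0:ℝ) := le_antisymm hzero this
      exact inner_self_eq_zero.mp h0
    exact sub_eq_zero.mp this
  exact hxeq ▸ hφlim
end

section
/- Let A ⊆ ℝᵈ be closed and convex, M : ℝᵈ → ℝᵈ monotone on A, and let μ, y ∈ A, β > 0, ε > 0. Suppose y = Proj_A[y - β(M(y) + εy)] and let μ⁺ = Proj_A[μ - β(M(μ) + q + r + εμ)] for vectors q, r ∈ ℝᵈ. Then ‖μ⁺ - y‖² ≤ (1 - 2βε)‖μ - y‖² - 2β(q + r, μ - y) + β²‖ε(μ - y) + M(μ) - M(y) + q + r‖². -/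
open RealInnerProductSpace

private lemma proj_inner_le {E : Type*} [NormedAddCommGroup E] [InnerProductSpace ℝ E]
    {K : Set E} (hK : Convex ℝ K) {u v : E} (hv : v ∈ K)
    (hmin : ∀ z ∈ K, ‖u - v‖ ≤ ‖u - z‖) : ∀ w ∈ K, ⟪u - v, w - v⟫ ≤ 0 := by
  have : Nonempty K := ⟨⟨v, hv⟩⟩
  have heq : ‖u - v‖ = ⨅ w : K, ‖u - w‖ := by
    refine le_antisymm (le_ciInf fun w => hmin w w.2) ?_
    exact ciInf_le ⟨0, fun x ⟨w, hw⟩ => hw ▸ norm_nonneg _⟩ (⟨v, hv⟩ : K)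
  exact (norm_eq_iInf_iff_real_inner_le_zero hK hv).mp heq

theorem stmt_17 {d : ℕ} (A : Set (EuclideanSpace ℝ (Fin d)))
    (hA_closed : IsClosed A) (hA_convex : Convex ℝ A)
    (M : EuclideanSpace ℝ (Fin d) → EuclideanSpace ℝ (Fin d))
    (hmono : ∀ x ∈ A, ∀ y ∈ A, 0 ≤ ⟪M x - M y, x - y⟫)
    (μ y μplus q r : EuclideanSpace ℝ (Fin d)) (hμ : μ ∈ A) (hy : y ∈ A)
    (β ε : ℝ) (hβ : 0 < β) (hε : 0 < ε)
    -- `y` is the projection of `y - β (M y + ε y)` onto `A` (i.e. a fixed point):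
    (hyfix : ∀ z ∈ A,
      ‖(y - β • (M y + ε • y)) - y‖ ≤ ‖(y - β • (M y + ε • y)) - z‖)
    -- `μplus` is the projection of `μ - β (M μ + q + r + ε μ)` onto `A`:
    (hμplus : μplus ∈ A)
    (hμplus_proj : ∀ z ∈ A,
      ‖(μ - β • (M μ + q + r + ε • μ)) - μplus‖ ≤ ‖(μ - β • (M μ + q + r + ε • μ)) - z‖) :
    ‖μplus - y‖ ^ 2 ≤ (1 - 2 * β * ε) * ‖μ - y‖ ^ 2 - 2 * β * ⟪q + r, μ - y⟫
      + β ^ 2 * ‖ε • (μ - y) + (M μ - M y) + q + r‖ ^ 2 := by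
  set u := μ - β • (M μ + q + r + ε • μ) with hu
  set v := y - β • (M y + ε • y) with hv
  set g := ε • (μ - y) + (M μ - M y) + q + r with hg
  have h1 : ⟪u - μplus, y - μplus⟫ ≤ 0 :=
    proj_inner_le hA_convex hμplus hμplus_proj y hy
  have h2 : ⟪v - y, μplus - y⟫ ≤ 0 :=
    proj_inner_le hA_convex hy hyfix μplus hμplus
  -- nonexpansiveness-type bound
  have key : ‖μplus - y‖ ^ 2 ≤ ⟪u - v, μplus - y⟫ := by
    have hid : ⟪u - v, μplus - y⟫
        = ‖μplus - y‖ ^ 2 + (- ⟪u - μplus, y - μplus⟫) + (- ⟪v - y, μplus - y⟫) := by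
      rw [← real_inner_self_eq_norm_sq]
      simp only [inner_sub_left, inner_sub_right]
      ring
    rw [hid]; linarith
  have huv : u - v = (μ - y) - β • g := by
    rw [hu, hv, hg]
    simp only [smul_add, smul_sub, smul_smul]
    abel
  have hmon : 0 ≤ ⟪M μ - M y, μ - y⟫ := hmono μ hμ y hy
  have hgin : ⟪g, μ - y⟫ = ε * ‖μ - y‖ ^ 2 + ⟪M μ - M y, μ - y⟫ + ⟪q + r, μ - y⟫ := by
    rw [hg]
    simp only [inner_add_left, real_inner_smul_left, real_inner_self_eq_norm_sq]
    ring
  have hexp : ⟪u - v, μplus - y⟫ ≤ ‖(μ - y) - β • g‖ * ‖μplus - y‖ := by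
    rw [huv]; exact real_inner_le_norm _ _
  have hnorm2 : ‖(μ - y) - β • g‖ ^ 2
      = ‖μ - y‖ ^ 2 - 2 * β * ⟪g, μ - y⟫ + β ^ 2 * ‖g‖ ^ 2 := by
    rw [norm_sub_sq_real, real_inner_smul_right, norm_smul, Real.norm_eq_abs, mul_pow, sq_abs,
      real_inner_comm]
    ring
  -- ‖μplus - y‖ ≤ ‖(μ - y) - β • g‖
  have hle : ‖μplus - y‖ ≤ ‖(μ - y) - β • g‖ := by
    rcases eq_or_lt_of_le (norm_nonneg (μplus - y)) with h0 | h0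
    · rw [← h0]; exact norm_nonneg _
    · have := key.trans hexp
      have : ‖μplus - y‖ ^ 2 ≤ ‖(μ - y) - β • g‖ * ‖μplus - y‖ := this
      nlinarith
  have hsq : ‖μplus - y‖ ^ 2 ≤ ‖(μ - y) - β • g‖ ^ 2 := by
    have := pow_le_pow_left₀ (norm_nonneg _) hle 2
    exact this
  rw [hnorm2, hgin] at hsq
  nlinarith [hsq, hmon, hβ.le, mul_nonneg hβ.le hmon]
end
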